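/- Let Q = (1−α)·P₁ + α·P₂ with α ∈ (0,1). Assume that log(dP₁/dQ) is integrable with respect to both P₁ and P₂ and that KL(P₁‖Q) and KL(Q‖P₁) are finite. Then (i) ∫ log((dP₁/dQ)(x)) dP₁(x) = KL(P₁‖Q) = KL(P₁‖P(1−α)) ≥ 0, and (ii) ∫ log((dP₁/dQ)(x)) dP₂(x) = −[(1/α)·KL(Q‖P₁) + ((1−α)/α)·KL(P₁‖Q)] = −f₁(α, 1−α) ≤ 0. (This is Proposition 1 of the paper in the case T_split ≤ T*, where α = α₁ = (n−T*)/(n−T_split): the expected log density ratio of P_left = P₁ against P_right = Q is nonnegative before the change point and nonpositive after it.) -/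

import Mathlib

open MeasureTheory ProbabilityTheory

/-- Kullback–Leibler divergence `KL(μ‖ν) = ∫ log (dμ/dν) dμ`. -/
noncomputable def KL {Ω : Type*} [MeasurableSpace Ω] (μ ν : Measure Ω) : ℝ :=
  ∫ x, Real.log ((μ.rnDeriv ν x).toReal) ∂μ

/-- The mixture distribution `P(λ) = λ·P₁ + (1-λ)·P₂`. -/
noncomputable def mix {Ω : Type*} [MeasurableSpace Ω] (P₁ P₂ : Measure Ω) (l : ℝ) :
    Measure Ω :=
  (ENNReal.ofReal l) • P₁ + (ENNReal.ofReal (1 - l)) • P₂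

lemma kl_nonneg' {Ω : Type*} [MeasurableSpace Ω] (μ ν : Measure Ω)
    [IsProbabilityMeasure μ] [IsProbabilityMeasure ν] (hμν : μ ≪ ν)
    (h : Integrable (llr μ ν) μ) : 0 ≤ ∫ x, llr μ ν x ∂μ := by
  have hint : Integrable (llr ν μ) μ := (h.neg).congr (neg_llr hμν)
  have hint2 : Integrable (fun x => (ν.rnDeriv μ x).toReal - 1) μ :=
    (Measure.integrable_toReal_rnDeriv).sub (integrable_const 1)
  have h1 : ∫ x, llr ν μ x ∂μ ≤ ∫ x, ((ν.rnDeriv μ x).toReal - 1) ∂μ := by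
    refine integral_mono_ae hint hint2 ?_
    filter_upwards [Measure.rnDeriv_pos' hμν, Measure.rnDeriv_ne_top ν μ] with x hpos hne
    have htr : 0 < (ν.rnDeriv μ x).toReal := ENNReal.toReal_pos hpos.ne' hne
    exact (Real.log_le_sub_one_of_pos htr)
  have h2 : ∫ x, ((ν.rnDeriv μ x).toReal - 1) ∂μ ≤ 0 := by
    rw [integral_sub Measure.integrable_toReal_rnDeriv (integrable_const 1),
      integral_const, Measure.integral_toReal_rnDeriv', probReal_univ]
    simp only [probReal_univ, ENNReal.toReal_one, smul_eq_mul, mul_one]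
    have : 0 ≤ (ν.singularPart μ).real Set.univ := measureReal_nonneg
    linarith
  have h3 : ∫ x, llr ν μ x ∂μ = - ∫ x, llr μ ν x ∂μ := by
    rw [← integral_neg]
    exact integral_congr_ae (neg_llr hμν).symm
  linarith [h1.trans h2]

/-- Proposition 1 of the paper, case `T_split ≤ T*`: with `Q = (1-α)·P₁ + α·P₂`,
the `P₁`-expectation of `log (dP₁/dQ)` equals `KL(P₁‖Q) = KL(P₁‖P(1-α)) ≥ 0` and the
`P₂`-expectation equals `-f₁(α, 1-α) = -[(1/α)·KL(Q‖P₁) + ((1-α)/α)·KL(P₁‖Q)] ≤ 0`. -/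
theorem stmt0 {Ω : Type*} [MeasurableSpace Ω] (P₁ P₂ : Measure Ω)
    [IsProbabilityMeasure P₁] [IsProbabilityMeasure P₂]
    (hac₁ : P₁ ≪ P₂) (hac₂ : P₂ ≪ P₁)
    (α : ℝ) (hα : α ∈ Set.Ioo (0 : ℝ) 1)
    (Q : Measure Ω) (hQ : Q = mix P₁ P₂ (1 - α))
    (hInt₁ : Integrable (fun x => Real.log ((P₁.rnDeriv Q x).toReal)) P₁)
    (hInt₂ : Integrable (fun x => Real.log ((P₁.rnDeriv Q x).toReal)) P₂)
    (hKLQ : Integrable (fun x => Real.log ((Q.rnDeriv P₁ x).toReal)) Q) :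
    ((∫ x, Real.log ((P₁.rnDeriv Q x).toReal) ∂P₁) = KL P₁ Q ∧
      KL P₁ Q = KL P₁ (mix P₁ P₂ (1 - α)) ∧ 0 ≤ KL P₁ Q) ∧
    ((∫ x, Real.log ((P₁.rnDeriv Q x).toReal) ∂P₂)
        = -((1 / α) * KL Q P₁ + ((1 - α) / α) * KL P₁ Q) ∧
      -((1 / α) * KL Q P₁ + ((1 - α) / α) * KL P₁ Q) ≤ 0) := by
  obtain ⟨hα0, hα1⟩ := hα
  set c : ENNReal := ENNReal.ofReal (1 - α) with hc
  set d : ENNReal := ENNReal.ofReal α with hd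
  have hQ' : Q = c • P₁ + d • P₂ := by
    rw [hQ]; unfold mix; rw [hc, hd]; norm_num
  have hc0 : c ≠ 0 := by
    simp [hc, ENNReal.ofReal_eq_zero]; linarith
  have hd0 : d ≠ 0 := by
    simp [hd, ENNReal.ofReal_eq_zero]; linarith
  have hctop : c ≠ ⊤ := ENNReal.ofReal_ne_top
  have hdtop : d ≠ ⊤ := ENNReal.ofReal_ne_top
  have hQprob : IsProbabilityMeasure Q := by
    constructor
    rw [hQ']
    simp only [Measure.coe_add, Pi.add_apply, Measure.smul_apply, smul_eq_mul,
      measure_univ, mul_one]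
    rw [hc, hd, ← ENNReal.ofReal_add (by linarith) (by linarith)]
    norm_num
  have hQ1 : Q ≪ P₁ := by
    rw [hQ']
    refine Measure.AbsolutelyContinuous.add_left_iff.mpr ⟨?_, ?_⟩
    · exact Measure.smul_absolutelyContinuous
    · exact (Measure.smul_absolutelyContinuous).trans hac₂
  have h1Q : P₁ ≪ Q := by
    rw [hQ']
    exact (Measure.absolutelyContinuous_smul hc0).trans
      (Measure.AbsolutelyContinuous.add_right (Measure.AbsolutelyContinuous.rfl) _)
  -- log density ratio as llr
  have f : Ω → ℝ := llr P₁ Q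
  have hi1 : Integrable (llr P₁ Q) P₁ := hInt₁
  have hi2 : Integrable (llr P₁ Q) P₂ := hInt₂
  set g := llr P₁ Q with hg
  -- integrability w.r.t. Q
  have hIntQ : Integrable g Q := by
    rw [hQ']
    exact integrable_add_measure.mpr ⟨(integrable_smul_measure hc0 hctop).mpr hi1,
      (integrable_smul_measure hd0 hdtop).mpr hi2⟩
  -- splitting of the Q-integral
  have hsplit : ∫ x, g x ∂Q = (1 - α) * (∫ x, g x ∂P₁) + α * (∫ x, g x ∂P₂) := by
    rw [hQ', integral_add_measure ((integrable_smul_measure hc0 hctop).mpr hi1)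
      ((integrable_smul_measure hd0 hdtop).mpr hi2),
      integral_smul_measure, integral_smul_measure, hc, hd,
      ENNReal.toReal_ofReal (by linarith), ENNReal.toReal_ofReal (by linarith)]
    simp [smul_eq_mul]
  -- the Q-integral equals -KL(Q‖P₁)
  have hQint : ∫ x, g x ∂Q = - KL Q P₁ := by
    have h : ∫ x, llr P₁ Q x ∂Q = ∫ x, - llr Q P₁ x ∂Q :=
      integral_congr_ae (neg_llr hQ1).symm
    rw [hg, h, integral_neg]
    rfl
  have kl₁ : 0 ≤ KL P₁ Q := kl_nonneg' P₁ Q h1Q hi1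
  have kl₂ : 0 ≤ KL Q P₁ := kl_nonneg' Q P₁ hQ1 hKLQ
  have hI1 : (∫ x, Real.log ((P₁.rnDeriv Q x).toReal) ∂P₁) = KL P₁ Q := rfl
  have hKLdef : KL P₁ Q = ∫ x, g x ∂P₁ := rfl
  refine ⟨⟨hI1, by rw [hQ], kl₁⟩, ?_, ?_⟩
  · have key : - KL Q P₁ = (1 - α) * KL P₁ Q + α * (∫ x, g x ∂P₂) := by
      rw [← hQint, hsplit, hKLdef]
    have hI2 : (∫ x, Real.log ((P₁.rnDeriv Q x).toReal) ∂P₂) = ∫ x, g x ∂P₂ := rfl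
    rw [hI2]
    field_simp
    nlinarith [key]
  · have h1 : 0 ≤ (1 / α) * KL Q P₁ := by positivity
    have h2 : 0 ≤ ((1 - α) / α) * KL P₁ Q :=
      mul_nonneg (div_nonneg (by linarith) (le_of_lt hα0)) kl₁
    linarith
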